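/- Let η = diag(1,−1,…,−1) be the (n+1)×(n+1) Minkowski matrix (indices 0,…,n) and let g = Aᵀ η A for some invertible real (n+1)×(n+1) matrix A, so g is a symmetric invertible matrix of Lorentzian signature (1,n). Set G = g⁻¹ and assume G₀₀ > 0. Suppose ξ ∈ ℝ^{n+1} satisfies ξᵀ G ξ = 0 and (G ξ)₀ < 0 (i.e. Σ_{j=0}^n G₀ⱼ ξⱼ < 0, the 'smaller-root' condition). Then for every ẋ ∈ ℝ^{n+1} with ẋᵀ g ẋ > 0 and ẋ₀ > 0 one has Σ_{j=0}^n ξⱼ ẋⱼ ≤ 0. -/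

import Mathlib

open Finset Matrix

private lemma cs_core {n : ℕ} (x y : Fin n → ℝ) (s t : ℝ)
    (hx : ∑ i, x i ^ 2 ≤ s ^ 2) (hy : ∑ i, y i ^ 2 < t ^ 2) (hs : s ≠ 0) :
    (∑ i, x i * y i) ^ 2 < (s * t) ^ 2 := by
  have hcs := Finset.sum_mul_sq_le_sq_mul_sq Finset.univ x y
  have hxn : (0:ℝ) ≤ ∑ i, x i ^ 2 := Finset.sum_nonneg fun i _ => sq_nonneg _
  have hyn : (0:ℝ) ≤ ∑ i, y i ^ 2 := Finset.sum_nonneg fun i _ => sq_nonneg _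
  have hs2 : (0:ℝ) < s ^ 2 := by positivity
  nlinarith [hcs, hxn, hyn, hs2]

set_option maxHeartbeats 1000000 in
theorem black_hole_conormal_pairing_nonpos (n : ℕ)
    (A g G : Matrix (Fin (n + 1)) (Fin (n + 1)) ℝ)
    (hA : IsUnit A.det)
    (hg : g = A.transpose *
      Matrix.diagonal (fun i : Fin (n + 1) => if i = 0 then (1 : ℝ) else -1) * A)
    (hG : G = g⁻¹)
    (hG00 : 0 < G 0 0)
    (ξ : Fin (n + 1) → ℝ)
    (hnull : dotProduct ξ (G.mulVec ξ) = 0)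
    (hroot : G.mulVec ξ 0 < 0) :
    ∀ xdot : Fin (n + 1) → ℝ,
      0 < dotProduct xdot (g.mulVec xdot) → 0 < xdot 0 →
      ∑ j : Fin (n + 1), ξ j * xdot j ≤ 0 := by
  intro xdot htime hx0
  set d : Fin (n+1) → ℝ := fun i => if i = 0 then (1:ℝ) else -1 with hd
  set η : Matrix (Fin (n+1)) (Fin (n+1)) ℝ := Matrix.diagonal d with hη
  set B : Matrix (Fin (n+1)) (Fin (n+1)) ℝ := A⁻¹ with hB
  have hBA : B * A = 1 := A.nonsing_inv_mul hA
  have hdd : d * d = 1 := by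
    funext i; by_cases h : i = 0 <;> simp [hd, h]
  have hηη : η * η = 1 := by
    rw [hη, Matrix.diagonal_mul_diagonal]
    have h1 : (fun i => d i * d i) = fun _ : Fin (n+1) => (1:ℝ) := by
      funext i; by_cases h : i = 0 <;> simp [hd, h]
    rw [h1]
    ext i j
    by_cases h : i = j <;> simp [Matrix.diagonal_apply, Matrix.one_apply, h]
  have hηinv : η⁻¹ = η := Matrix.inv_eq_right_inv hηη
  have hGeq : G = B * η * Bᵀ := by
    rw [hG, hg, Matrix.mul_inv_rev, Matrix.mul_inv_rev, hηinv,
      ← Matrix.transpose_nonsing_inv, ← hB, Matrix.mul_assoc]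
  have hdiag : ∀ w : Fin (n+1) → ℝ, η.mulVec w = fun i => d i * w i := by
    intro w; funext i; rw [hη]; exact Matrix.mulVec_diagonal d w i
  -- vectors
  set u : Fin (n+1) → ℝ := Matrix.vecMul ξ B with hu
  set v : Fin (n+1) → ℝ := A.mulVec xdot with hv
  have hGξ : G.mulVec ξ = B.mulVec (fun i => d i * u i) := by
    rw [hGeq, Matrix.mul_assoc, ← Matrix.mulVec_mulVec, ← Matrix.mulVec_mulVec,
      Matrix.mulVec_transpose, ← hu, hdiag]
  -- null condition
  have hnull' : ∑ i, u i * (d i * u i) = 0 := by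
    rw [← hnull, hGξ, Matrix.dotProduct_mulVec, ← hu]
    rfl
  -- root condition
  have hroot' : ∑ k, B 0 k * (d k * u k) < 0 := by
    have h1 : (G.mulVec ξ) 0 = ∑ k, B 0 k * (d k * u k) := by
      rw [hGξ]; rfl
    rw [← h1]; exact hroot
  -- G00
  have hG00' : 0 < ∑ k, B 0 k * (d k * B 0 k) := by
    have h1 : G 0 0 = ∑ k, B 0 k * (d k * B 0 k) := by
      rw [hGeq, Matrix.mul_apply]
      refine Finset.sum_congr rfl fun k _ => ?_
      rw [Matrix.mul_diagonal, Matrix.transpose_apply]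
      ring
    rw [← h1]; exact hG00
  -- timelike
  have htime' : 0 < ∑ k, v k * (d k * v k) := by
    have h1 : dotProduct xdot (g.mulVec xdot)
        = ∑ k, v k * (d k * v k) := by
      rw [hg, Matrix.mul_assoc, ← Matrix.mulVec_mulVec, Matrix.dotProduct_mulVec,
        Matrix.vecMul_transpose, ← Matrix.mulVec_mulVec, ← hv, hdiag]
      rfl
    rw [← h1]; exact htime
  -- xdot recovered from v
  have hxv : xdot = B.mulVec v := by
    rw [hv, Matrix.mulVec_mulVec, hBA, Matrix.one_mulVec]
  have hx0' : 0 < ∑ k, B 0 k * v k := by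
    have h1 : xdot 0 = ∑ k, B 0 k * v k := by rw [hxv]; rfl
    rw [← h1]; exact hx0
  -- goal
  have hgoal : ∑ j : Fin (n+1), ξ j * xdot j = ∑ k, u k * v k := by
    have h1 : ∑ j : Fin (n+1), ξ j * xdot j = dotProduct ξ (B.mulVec v) := by
      rw [← hxv]; rfl
    rw [h1, Matrix.dotProduct_mulVec, ← hu]; rfl
  rw [hgoal]
  -- split off index 0
  set p : Fin (n+1) → ℝ := B 0 with hp
  have hd0 : d 0 = 1 := by simp [hd]
  have hds : ∀ i : Fin n, d i.succ = -1 := fun i => by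
    simp [hd, Fin.succ_ne_zero i]
  rw [Fin.sum_univ_succ] at hnull' hroot' hG00' htime' hx0' ⊢
  simp only [hd0, hds, one_mul, neg_one_mul, mul_neg] at hnull' hroot' hG00' htime'
  -- abbreviations
  set u0 := u 0
  set v0 := v 0
  set p0 := p 0
  set a : Fin n → ℝ := fun i => u i.succ with ha
  set b : Fin n → ℝ := fun i => v i.succ with hb
  set q : Fin n → ℝ := fun i => p i.succ with hq
  -- rewrite hypotheses into clean form
  have Hnull : ∑ i, a i ^ 2 = u0 ^ 2 := by
    have h2 : ∑ i : Fin n, -(u i.succ * u i.succ) = -∑ i, a i ^ 2 := by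
      rw [← Finset.sum_neg_distrib]
      all_goals exact Finset.sum_congr rfl fun i _ => by simp [ha]; ring
    nlinarith [hnull', h2]
  have Hroot : p0 * u0 - ∑ i, q i * a i < 0 := by
    have h2 : ∑ i : Fin n, -(p i.succ * u i.succ) = -∑ i, q i * a i := by
      rw [← Finset.sum_neg_distrib]
      all_goals exact Finset.sum_congr rfl fun i _ => by simp [ha, hq]
    linarith [hroot', h2.symm.le, h2.le]
  have HG : ∑ i, q i ^ 2 < p0 ^ 2 := by
    have h2 : ∑ i : Fin n, -(p i.succ * p i.succ) = -∑ i, q i ^ 2 := by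
      rw [← Finset.sum_neg_distrib]
      all_goals exact Finset.sum_congr rfl fun i _ => by simp [hq]; ring
    nlinarith [hG00', h2]
  have Htime : ∑ i, b i ^ 2 < v0 ^ 2 := by
    have h2 : ∑ i : Fin n, -(v i.succ * v i.succ) = -∑ i, b i ^ 2 := by
      rw [← Finset.sum_neg_distrib]
      all_goals exact Finset.sum_congr rfl fun i _ => by simp [hb]; ring
    nlinarith [htime', h2]
  have Hx0 : 0 < p0 * v0 + ∑ i, q i * b i := by
    have h2 : ∑ i : Fin n, p i.succ * v i.succ = ∑ i, q i * b i :=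
      Finset.sum_congr rfl fun i _ => by simp [hq, hb]
    linarith [hx0', h2.le, h2.symm.le]
  -- nonvanishing
  have hp0 : p0 ≠ 0 := by
    intro h; rw [h] at HG
    have : (0:ℝ) ≤ ∑ i, q i ^ 2 := Finset.sum_nonneg fun i _ => sq_nonneg _
    nlinarith
  have hu0 : u0 ≠ 0 := by
    intro h
    have hz : ∑ i, a i ^ 2 = 0 := by rw [Hnull, h]; ring
    have hai : ∀ i ∈ Finset.univ, a i ^ 2 = 0 :=
      (Finset.sum_eq_zero_iff_of_nonneg (fun i _ => sq_nonneg (a i))).mp hz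
    have hqa : ∑ i, q i * a i = 0 := by
      refine Finset.sum_eq_zero fun i _ => ?_
      have h3 := hai i (Finset.mem_univ i)
      have h4 : a i = 0 := by nlinarith [h3, sq_nonneg (a i)]
      rw [h4, mul_zero]
    rw [h, hqa] at Hroot; simp at Hroot
  -- Cauchy–Schwarz consequences
  have Cqa : (∑ i, a i * q i) ^ 2 < (u0 * p0) ^ 2 :=
    cs_core a q u0 p0 (le_of_eq Hnull) HG hu0
  have Cqb : (∑ i, q i * b i) ^ 2 < (p0 * v0) ^ 2 :=
    cs_core q b p0 v0 (le_of_lt HG) Htime hp0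
  have Cab : (∑ i, a i * b i) ^ 2 < (u0 * v0) ^ 2 :=
    cs_core a b u0 v0 (le_of_eq Hnull) Htime hu0
  have hqa_comm : ∑ i, q i * a i = ∑ i, a i * q i :=
    Finset.sum_congr rfl fun i _ => mul_comm _ _
  rw [hqa_comm] at Hroot
  -- sign deductions
  have hpu : p0 * u0 < 0 := by nlinarith [Cqa, Hroot]
  have hpv : 0 < p0 * v0 := by nlinarith [Cqb, Hx0]
  have huv : u0 * v0 < 0 := by nlinarith [hpu, hpv, sq_nonneg p0, hp0, mul_pos hpv hpv]
  have h2 : ∑ i : Fin n, u i.succ * v i.succ = ∑ i, a i * b i :=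
    Finset.sum_congr rfl fun i _ => by rw [ha, hb]
  rw [h2]
  nlinarith [Cab, huv]
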